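/- Let s be a positive integer with gcd(s, m) = 1, and let v = (v_1, …, v_n) ∈ F_{q^m}^n be a vector with rank_q(v) = r. Then the r vectors v, v^{[s]}, v^{[2s]}, …, v^{[s(r−1)]} are linearly independent over F_{q^m}, where v^{[j]} denotes the coordinatewise q^j-th power of v. -/

import Mathlib

open Matrix

/-- The rank over the subfield `Fq` of a vector with entries in `K`:
the `Fq`-dimension of the `Fq`-span of its coordinates. -/
noncomputable def rankQ (Fq : Type) {K : Type} [Field Fq] [Field K] [Algebra Fq K] {n : ℕ}
    (v : Fin n → K) : ℕ :=
  Module.finrank Fq (Submodule.span Fq (Set.range v))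

/-- The minimum rank distance of a linear rank-metric code `C ⊆ K^n`. -/
noncomputable def minRankDist (Fq : Type) {K : Type} [Field Fq] [Field K] [Algebra Fq K] {n : ℕ}
    (C : Submodule K (Fin n → K)) : ℕ :=
  sInf (rankQ Fq '' {c : Fin n → K | c ∈ C ∧ c ≠ 0})

/-- A linear code `C ⊆ K^n` of dimension `k` over `K` is MRD if its minimum
rank distance equals `n - k + 1`. -/
def IsMRD (Fq : Type) {K : Type} [Field Fq] [Field K] [Algebra Fq K] {n : ℕ}
    (C : Submodule K (Fin n → K)) (k : ℕ) : Prop :=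
  Module.finrank K C = k ∧ minRankDist Fq C = n - k + 1

/-- `G` is a generator matrix of `C`: its rows form a `K`-basis of `C`. -/
def IsGenMat {K : Type} [Field K] {k n : ℕ} (C : Submodule K (Fin n → K))
    (G : Matrix (Fin k) (Fin n) K) : Prop :=
  LinearIndependent K (fun i => G i) ∧ Submodule.span K (Set.range fun i => G i) = C

section Stmt5Aux

variable {Fq K : Type} [Field Fq] [Field K] [Algebra Fq K]

private lemma pow_q_pow {q : ℕ} (y : K) (hy : y ^ q = y) : ∀ k : ℕ, y ^ q ^ k = y
  | 0 => by simp
  | k + 1 => by rw [pow_succ, pow_mul, pow_q_pow y hy k, hy]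

/-- `x ↦ x ^ q ^ k` as an `Fq`-linear endomorphism of `K`. -/
private noncomputable def frobLin (p e q : ℕ) (hp : Fact p.Prime) (hcp : CharP K p)
    (hq : q = p ^ e) (hfq : ∀ a : Fq, a ^ q = a) (k : ℕ) : K →ₗ[Fq] K where
  toFun x := x ^ q ^ k
  map_add' x y := by
    haveI := hp; haveI := hcp
    have h : q ^ k = p ^ (e * k) := by rw [hq, ← pow_mul]
    rw [h]; exact add_pow_char_pow x y p (e * k)
  map_smul' a x := by
    haveI := hp; haveI := hcp
    simp only [RingHom.id_apply, Algebra.smul_def, mul_pow]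
    have h : (algebraMap Fq K a) ^ q = algebraMap Fq K a := by
      rw [← map_pow, hfq]
    rw [pow_q_pow _ h]

private lemma frobLin_apply (p e q : ℕ) (hp : Fact p.Prime) (hcp : CharP K p)
    (hq : q = p ^ e) (hfq : ∀ a : Fq, a ^ q = a) (k : ℕ) (x : K) :
    frobLin p e q hp hcp hq hfq k x = x ^ q ^ k := rfl

/-- The `σ`-linearized operator with coefficients `c`, `x ↦ ∑_{i<d} c i * x^(q^(s i))`. -/
private noncomputable def Lop (p e q : ℕ) (hp : Fact p.Prime) (hcp : CharP K p)
    (hq : q = p ^ e) (hfq : ∀ a : Fq, a ^ q = a) (s : ℕ) (c : ℕ → K) (d : ℕ) : K →ₗ[Fq] K :=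
  ∑ i ∈ Finset.range d, c i • frobLin p e q hp hcp hq hfq (s * i)

private lemma Lop_apply (p e q : ℕ) (hp : Fact p.Prime) (hcp : CharP K p)
    (hq : q = p ^ e) (hfq : ∀ a : Fq, a ^ q = a) (s : ℕ) (c : ℕ → K) (d : ℕ) (x : K) :
    Lop p e q hp hcp hq hfq s c d x = ∑ i ∈ Finset.range d, c i * x ^ q ^ (s * i) := by
  simp [Lop, frobLin_apply, smul_eq_mul]

private lemma finrank_ker_comp_le [FiniteDimensional Fq K] (f g : K →ₗ[Fq] K) :
    Module.finrank Fq (LinearMap.ker (g ∘ₗ f)) ≤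
      Module.finrank Fq (LinearMap.ker g) + Module.finrank Fq (LinearMap.ker f) := by
  classical
  set W := LinearMap.ker (g ∘ₗ f) with hW
  have hmap : ∀ x ∈ W, f x ∈ LinearMap.ker g := by
    intro x hx
    simpa [hW, LinearMap.mem_ker] using hx
  let h : W →ₗ[Fq] LinearMap.ker g := f.restrict hmap
  have hrn := LinearMap.finrank_range_add_finrank_ker h
  have h1 : Module.finrank Fq (LinearMap.range h) ≤ Module.finrank Fq (LinearMap.ker g) :=
    (LinearMap.range h).finrank_le
  have h2 : Module.finrank Fq (LinearMap.ker h) ≤ Module.finrank Fq (LinearMap.ker f) := by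
    let j : LinearMap.ker h →ₗ[Fq] LinearMap.ker f :=
      { toFun := fun x => ⟨(x.1 : K), by
          have hx := x.2
          simp only [LinearMap.mem_ker, h, LinearMap.restrict_apply] at hx
          have hfx : f (x.1 : K) = 0 := by simpa [Subtype.ext_iff] using hx
          simpa [LinearMap.mem_ker] using hfx⟩
        map_add' := fun a b => rfl
        map_smul' := fun a b => rfl }
    have hinj : Function.Injective j := by
      intro a b hab
      have hval := Subtype.ext_iff.mp hab
      exact Subtype.ext (Subtype.ext hval)
    exact LinearMap.finrank_le_finrank_of_injective hinj
  omega

private lemma ker_frob_sub_id [Fintype Fq] [Fintype K] {p e q s m : ℕ}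
    (hp : Fact p.Prime) (hcp : CharP K p)
    (hq : q = p ^ e) (hfq : ∀ a : Fq, a ^ q = a)
    (hcardFq : Fintype.card Fq = q) (hcardK : Fintype.card K = q ^ m)
    (hm : 1 ≤ m) (hgcd : Nat.gcd s m = 1) [FiniteDimensional Fq K] :
    Module.finrank Fq
      (LinearMap.ker (frobLin p e q hp hcp hq hfq s - LinearMap.id)) ≤ 1 := by
  classical
  have hq2 : 1 < q := hcardFq ▸ Fintype.one_lt_card
  -- iterate fixed points
  have pow_iter : ∀ (x : K) (t : ℕ), x ^ q ^ t = x → ∀ a, x ^ q ^ (t * a) = x := by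
    intro x t hx a
    induction a with
    | zero => simp
    | succ a ih => rw [Nat.mul_succ, pow_add, pow_mul, ih, hx]
  have hxm : ∀ x : K, x ^ q ^ m = x := fun x => by
    rw [← hcardK]; exact FiniteField.pow_card x
  have key : ∀ x : K, x ^ q ^ s = x → x ^ q = x := by
    intro x hxs
    by_cases hm1 : m = 1
    · have := hxm x
      rwa [hm1, pow_one] at this
    · have hm2 : 1 < m := by omega
      obtain ⟨a, -, ha⟩ := Nat.exists_mul_mod_eq_one_of_coprime hgcd hm2
      have hdiv : s * a = m * (s * a / m) + 1 := by
        have := Nat.div_add_mod (s * a) m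
        omega
      have h1 : x ^ q ^ (s * a) = x := pow_iter x s hxs a
      have h2 : x ^ q ^ (m * (s * a / m)) = x := pow_iter x m (hxm x) _
      have h3 : x ^ q ^ (s * a) = x ^ q := by
        rw [hdiv, pow_succ, pow_mul, h2]
      rw [← h3, h1]
  -- kernel is contained in the image of Fq
  have hsub : LinearMap.ker (frobLin p e q hp hcp hq hfq s - LinearMap.id) ≤
      LinearMap.range (Algebra.linearMap Fq K) := by
    intro x hx
    have hx' : x ^ q = x := by
      apply key
      have := LinearMap.mem_ker.mp hx
      simp only [LinearMap.sub_apply, LinearMap.id_apply, frobLin_apply] at this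
      exact sub_eq_zero.mp this
    set P : Polynomial K := Polynomial.X ^ q - Polynomial.X with hP
    have hdeg : P.natDegree = q := by
      rw [hP, Polynomial.natDegree_sub_eq_left_of_natDegree_lt]
      · simp [Polynomial.natDegree_X_pow]
      · simp only [Polynomial.natDegree_X_pow, Polynomial.natDegree_X]
        omega
    have hP0 : P ≠ 0 := by
      intro h
      rw [h] at hdeg
      simp at hdeg
      omega
    set A : Finset K := Finset.univ.image (algebraMap Fq K) with hA
    set T : Finset K := P.roots.toFinset with hT
    have hAT : A ⊆ T := by
      intro y hy
      obtain ⟨a, -, rfl⟩ := Finset.mem_image.mp hy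
      rw [hT, Multiset.mem_toFinset, Polynomial.mem_roots hP0]
      simp only [Polynomial.IsRoot, hP, Polynomial.eval_sub, Polynomial.eval_pow,
        Polynomial.eval_X]
      rw [← map_pow, hfq, sub_self]
    have hcardA : A.card = q := by
      rw [hA, Finset.card_image_of_injective _ (algebraMap Fq K).injective,
        Finset.card_univ, hcardFq]
    have hcardT : T.card ≤ q := by
      calc T.card ≤ Multiset.card P.roots := Multiset.toFinset_card_le _
        _ ≤ P.natDegree := Polynomial.card_roots' P
        _ = q := hdeg
    have hTA : T = A := (Finset.eq_of_subset_of_card_le hAT (by omega)).symm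
    have hxT : x ∈ T := by
      rw [hT, Multiset.mem_toFinset, Polynomial.mem_roots hP0]
      simp [Polynomial.IsRoot, hP, hx']
    rw [hTA] at hxT
    obtain ⟨a, -, ha⟩ := Finset.mem_image.mp hxT
    exact ⟨a, ha⟩
  calc Module.finrank Fq (LinearMap.ker (frobLin p e q hp hcp hq hfq s - LinearMap.id))
      ≤ Module.finrank Fq (LinearMap.range (Algebra.linearMap Fq K)) :=
        Submodule.finrank_mono hsub
    _ ≤ Module.finrank Fq Fq := LinearMap.finrank_range_le _
    _ = 1 := Module.finrank_self Fq

private lemma ker_Lop_le {p e q s : ℕ}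
    (hp : Fact p.Prime) (hcp : CharP K p)
    (hq : q = p ^ e) (hfq : ∀ a : Fq, a ^ q = a) [FiniteDimensional Fq K]
    (hfix : Module.finrank Fq
      (LinearMap.ker (frobLin p e q hp hcp hq hfq s - LinearMap.id)) ≤ 1) :
    ∀ (d : ℕ) (c : ℕ → K), c d ≠ 0 →
      Module.finrank Fq (LinearMap.ker (Lop p e q hp hcp hq hfq s c (d + 1))) ≤ d := by
  classical
  haveI := hp
  haveI := hcp
  intro d
  induction d with
  | zero =>
    intro c hc
    have hker : LinearMap.ker (Lop p e q hp hcp hq hfq s c 1) = ⊥ := by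
      rw [LinearMap.ker_eq_bot']
      intro x hx
      rw [Lop_apply] at hx
      simp only [Finset.sum_range_one, Nat.mul_zero, pow_zero, pow_one] at hx
      rcases mul_eq_zero.mp hx with h | h
      · exact absurd h hc
      · exact h
    rw [hker]
    simp
  | succ d ih =>
    intro c hc
    set L := Lop p e q hp hcp hq hfq s c (d + 2) with hL
    by_cases hker : LinearMap.ker L = ⊥
    · rw [hker]; simp
    · obtain ⟨u, huK, hu0⟩ := Submodule.exists_mem_ne_zero_of_ne_bot hker
      set b : ℕ → K := fun i => c i * u ^ q ^ (s * i) with hb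
      have hbsum : ∑ i ∈ Finset.range (d + 2), b i = 0 := by
        have := LinearMap.mem_ker.mp huK
        rwa [hL, Lop_apply] at this
      set mc : ℕ → K := fun i => ∑ j ∈ Finset.Ico (i + 1) (d + 2), b j with hmc
      have hmd : mc d ≠ 0 := by
        have : mc d = b (d + 1) := by
          rw [hmc]
          simp [Nat.Ico_succ_singleton]
        rw [this, hb]
        exact mul_ne_zero hc (pow_ne_zero _ hu0)
      set D : K →ₗ[Fq] K := frobLin p e q hp hcp hq hfq s - LinearMap.id with hD
      set M := Lop p e q hp hcp hq hfq s mc (d + 1) with hM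
      -- the key pointwise identity : L (u * x) = M (D x)
      have hkey : ∀ x : K, L (u * x) = M (D x) := by
        intro x
        have hqpow : ∀ i : ℕ, (q : ℕ) ^ (s * i) = p ^ (e * (s * i)) := by
          intro i; rw [hq, ← pow_mul]
        -- notation
        set f : ℕ → K := fun i => x ^ q ^ (s * i) with hf
        have hDx : D x = x ^ q ^ (s * 1) - x := by
          rw [hD]
          simp [frobLin_apply, Nat.mul_one]
        have hsubpow : ∀ i : ℕ, (x ^ q ^ (s * 1) - x) ^ q ^ (s * i) = f (i + 1) - f i := by
          intro i
          rw [hqpow i, sub_pow_char_pow, ← hqpow i, hf]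
          have h1 : (x ^ q ^ (s * 1)) ^ q ^ (s * i) = x ^ q ^ (s * (i + 1)) := by
            rw [← pow_mul, ← pow_add]
            congr 1
            have : s * 1 + s * i = s * (i + 1) := by ring
            rw [this]
          rw [h1]
        have hLHS : L (u * x) = ∑ i ∈ Finset.range (d + 2), b i * f i := by
          rw [hL, Lop_apply]
          refine Finset.sum_congr rfl fun i _ => ?_
          rw [hb, hf, mul_pow]
          ring
        have hRHS : M (D x) = ∑ i ∈ Finset.range (d + 1), mc i * (f (i + 1) - f i) := by
          rw [hM, Lop_apply, hDx]
          refine Finset.sum_congr rfl fun i _ => ?_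
          rw [hsubpow i]
        rw [hLHS, hRHS]
        have hstep : ∀ i ∈ Finset.range (d + 1),
            mc i * (f (i + 1) - f i) =
              b (i + 1) * f (i + 1) + (mc (i + 1) * f (i + 1) - mc i * f i) := by
          intro i hi
          have hilt : i + 1 < d + 2 := by
            have := Finset.mem_range.mp hi; omega
          have hsplit : mc i = b (i + 1) + mc (i + 1) := by
            rw [hmc]
            exact Finset.sum_eq_sum_Ico_succ_bot hilt b
          rw [hsplit]
          ring
        rw [Finset.sum_congr rfl hstep, Finset.sum_add_distrib,
          Finset.sum_range_sub (fun i => mc i * f i)]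
        have hmtop : mc (d + 1) = 0 := by
          rw [hmc]; simp
        have hm0 : mc 0 = -b 0 := by
          have h0 : ∑ i ∈ Finset.range (d + 2), b i = b 0 + mc 0 := by
            rw [hmc, Finset.range_eq_Ico]
            exact Finset.sum_eq_sum_Ico_succ_bot (by omega) b
          rw [h0] at hbsum
          linear_combination hbsum
        rw [hmtop, hm0]
        rw [(Finset.sum_range_succ' (fun i => b i * f i) (d + 1))]
        ring
      -- kernel chain
      have hchain : LinearMap.ker L ≤
          Submodule.map (LinearMap.mulLeft Fq u) (LinearMap.ker (M ∘ₗ D)) := by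
        intro x hx
        refine ⟨u⁻¹ * x, ?_, ?_⟩
        · simp only [SetLike.mem_coe, LinearMap.mem_ker, LinearMap.comp_apply]
          rw [← hkey]
          have : u * (u⁻¹ * x) = x := by
            field_simp
          rw [this]
          exact LinearMap.mem_ker.mp hx
        · show u * (u⁻¹ * x) = x
          field_simp
      calc Module.finrank Fq (LinearMap.ker L)
          ≤ Module.finrank Fq
            (Submodule.map (LinearMap.mulLeft Fq u) (LinearMap.ker (M ∘ₗ D))) :=
            Submodule.finrank_mono hchain
        _ ≤ Module.finrank Fq (LinearMap.ker (M ∘ₗ D)) := Submodule.finrank_map_le _ _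
        _ ≤ Module.finrank Fq (LinearMap.ker M) + Module.finrank Fq (LinearMap.ker D) :=
            finrank_ker_comp_le D M
        _ ≤ d + 1 := by
            have := ih mc hmd
            rw [← hM] at this
            omega

end Stmt5Aux

/-- if `v` has rank `r` over `F_q` and `gcd(s, m) = 1`, then
`v, v^[s], …, v^[s(r-1)]` are linearly independent over `F_{q^m}`. -/
theorem stmt5 {q m s n r : ℕ} (Fq K : Type) [Field Fq] [Fintype Fq] [Field K] [Fintype K]
    [Algebra Fq K] (hq : Fintype.card Fq = q) (hK : Fintype.card K = q ^ m)
    (hs : 0 < s) (hgcd : Nat.gcd s m = 1)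
    (v : Fin n → K) (hv : rankQ Fq v = r) :
    LinearIndependent K (fun i : Fin r => fun j : Fin n => (v j) ^ q ^ (s * (i : ℕ))) := by
  classical
  haveI : CharP Fq (ringChar Fq) := ringChar.charP Fq
  set p := ringChar Fq with hpdef
  obtain ⟨e, hpprime, hcard⟩ := FiniteField.card Fq p
  have hq' : q = p ^ (e : ℕ) := by rw [← hq, hcard]
  haveI hp : Fact p.Prime := ⟨hpprime⟩
  haveI hcp : CharP K p := charP_of_injective_algebraMap (algebraMap Fq K).injective p
  have hfq : ∀ a : Fq, a ^ q = a := fun a => by rw [← hq]; exact FiniteField.pow_card a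
  haveI : FiniteDimensional Fq K := ⟨⟨Finset.univ, by rw [Finset.coe_univ]; exact Submodule.span_univ⟩⟩
  have hm : 1 ≤ m := by
    rcases Nat.eq_zero_or_pos m with h | h
    · exfalso
      rw [h, pow_zero] at hK
      have := Fintype.one_lt_card (α := K)
      omega
    · exact h
  have hfix := ker_frob_sub_id (s := s) hp hcp hq' hfq hq hK hm hgcd
  have hbound := ker_Lop_le hp hcp hq' hfq hfix
  rw [Fintype.linearIndependent_iff]
  intro g hg
  by_contra hne
  push_neg at hne
  obtain ⟨i₀, hi₀⟩ := hne
  set c : ℕ → K := fun i => if h : i < r then g ⟨i, h⟩ else 0 with hc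
  set T : Finset ℕ := (Finset.range r).filter (fun i => c i ≠ 0) with hT
  have hTne : T.Nonempty := by
    refine ⟨(i₀ : ℕ), ?_⟩
    simp only [hT, Finset.mem_filter, Finset.mem_range]
    refine ⟨i₀.isLt, ?_⟩
    rw [hc]
    simpa [i₀.isLt] using hi₀
  set d := T.max' hTne with hd
  have hdT : d ∈ T := T.max'_mem hTne
  have hdr : d < r := Finset.mem_range.mp (Finset.mem_filter.mp hdT).1
  have hcd : c d ≠ 0 := (Finset.mem_filter.mp hdT).2
  have hmax : ∀ j, d < j → c j = 0 := by
    intro j hj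
    by_cases hjr : j < r
    · by_contra hcj
      have hjT : j ∈ T := Finset.mem_filter.mpr ⟨Finset.mem_range.mpr hjr, hcj⟩
      have := Finset.le_max' T j hjT
      omega
    · rw [hc]; simp [hjr]
  set L := Lop p (e : ℕ) q hp hcp hq' hfq s c (d + 1) with hLdef
  have hLv : ∀ j : Fin n, L (v j) = 0 := by
    intro j
    rw [hLdef, Lop_apply]
    have hgj : ∑ i : Fin r, g i * (v j) ^ q ^ (s * (i : ℕ)) = 0 := by
      have := congrFun hg j
      simpa [Finset.sum_apply, smul_eq_mul] using this
    have h1 : ∑ i ∈ Finset.range r, c i * (v j) ^ q ^ (s * i) = 0 := by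
      rw [← Fin.sum_univ_eq_sum_range (fun i => c i * (v j) ^ q ^ (s * i)) r, ← hgj]
      refine Finset.sum_congr rfl fun i _ => ?_
      congr 1
      rw [hc]
      simp [i.isLt]
    have h2 : ∑ i ∈ Finset.range (d + 1), c i * (v j) ^ q ^ (s * i) =
        ∑ i ∈ Finset.range r, c i * (v j) ^ q ^ (s * i) := by
      refine Finset.sum_subset ?_ ?_
      · intro x hx
        simp only [Finset.mem_range] at hx ⊢
        omega
      · intro x hx hnx
        simp only [Finset.mem_range] at hx hnx
        have hdx : d < x := by omega
        rw [hmax x hdx, zero_mul]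
    rw [h2, h1]
  have hspan : Submodule.span Fq (Set.range v) ≤ LinearMap.ker L := by
    rw [Submodule.span_le]
    rintro x ⟨j, rfl⟩
    exact LinearMap.mem_ker.mpr (hLv j)
  have hrank : r ≤ d := by
    have hmono := Submodule.finrank_mono hspan
    rw [rankQ] at hv
    rw [hv] at hmono
    exact hmono.trans (hbound d c hcd)
  omega
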